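/- Let G be a group acting on a set X, let r ≥ 1 be an integer, let σ ∈ 𝔖_r be the cyclic permutation of Fin r = {0,1,…,r−1} given by i ↦ i+1 (mod r), let g = (g_0,…,g_{r−1}) ∈ G^r, and set c = g_{r−1}⋯g_1·g_0. Then the map x ↦ x_{r−1} is a bijection from the fixed-point set of the element (g,σ) ∈ G≀𝔖_r acting on X^r onto X^{⟨c⟩} = {y ∈ X : c·y = y}. In particular the fixed-point set of (g,σ) on X^r is in bijection with the fixed-point set of the cycle product c on X. -/

import Mathlib

set_option synthInstance.maxHeartbeats 1000000
set_option maxHeartbeats 1000000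


/-- The permutation action of `Equiv.Perm (Fin n)` on `Fin n → G` by automorphisms. -/
def wreathAut (G : Type*) [Group G] (n : ℕ) : Equiv.Perm (Fin n) →* MulAut (Fin n → G) where
  toFun s :=
    { toFun := fun g i => g (s⁻¹ i)
      invFun := fun g i => g (s i)
      left_inv := fun g => funext fun i => by simp
      right_inv := fun g => funext fun i => by simp
      map_mul' := fun g h => rfl }
  map_one' := by
    ext g i
    simp
  map_mul' s t := by
    ext g i
    simp [mul_comm]

/-- The wreath product `G ≀ 𝔖_n`. -/
abbrev WreathProduct (G : Type*) [Group G] (n : ℕ) : Type _ :=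
  SemidirectProduct (Fin n → G) (Equiv.Perm (Fin n)) (wreathAut G n)

/-- The action of `G ≀ 𝔖_n` on `Xⁿ`, `((g,s)·x) i = g i • x (s⁻¹ i)`. -/
instance wreathMulAction (G X : Type*) [Group G] [MulAction G X] (n : ℕ) :
    MulAction (WreathProduct G n) (Fin n → X) where
  smul w x := fun i => w.left i • x (w.right⁻¹ i)
  one_smul x := funext fun i => by
    show (1 : WreathProduct G n).left i • x ((1 : WreathProduct G n).right⁻¹ i) = x i
    simp
  mul_smul w v x := funext fun i => by
    show (w * v).left i • x ((w * v).right⁻¹ i)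
        = w.left i • (fun j => v.left j • x (v.right⁻¹ j)) (w.right⁻¹ i)
    simp [SemidirectProduct.mul_left, SemidirectProduct.mul_right, wreathAut, mul_smul]


/-- The cycle product `g_{r-1} ⋯ g_1 g_0` of a tuple `g : Fin r → G`. -/
def cycleProdOf {G : Type*} [Group G] {r : ℕ} (g : Fin r → G) : G :=
  (List.ofFn g).reverse.prod


section Aux
variable {G X : Type} [Group G] [MulAction G X] {n : ℕ}

/-- Partial cycle products `P k = g_k ⋯ g_1 g_0`. -/
def partProd (g : Fin (n+1) → G) (k : ℕ) : G :=
  ((List.ofFn g).take (k+1)).reverse.prod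

lemma partProd_succ (g : Fin (n+1) → G) {k : ℕ} (hk : k < n) :
    partProd g (k+1) = g ⟨k+1, by omega⟩ * partProd g k := by
  unfold partProd
  rw [List.take_succ]
  have : (List.ofFn g)[k+1]? = some (g ⟨k+1, by omega⟩) := by
    rw [List.getElem?_eq_getElem (by simp; omega)]
    simp
  rw [this]
  simp

lemma partProd_last (g : Fin (n+1) → G) : partProd g n = cycleProdOf g := by
  unfold partProd cycleProdOf
  rw [List.take_of_length_le (by simp)]

lemma partProd_zero (g : Fin (n+1) → G) : partProd g 0 = g 0 := by
  simp [partProd, List.take_succ]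

lemma fin_add_one (k : ℕ) (hk : k < n) :
    (⟨k, by omega⟩ : Fin (n+1)) + 1 = ⟨k+1, by omega⟩ := by
  ext
  simp [Fin.val_add, Nat.mod_eq_of_lt, Nat.mod_eq_of_lt (show k+1 < n+1 by omega)]

lemma fixed_iff (g : Fin (n+1) → G) (x : Fin (n+1) → X) :
    (⟨g, finRotate (n+1)⟩ : WreathProduct G (n+1)) • x = x ↔
      ∀ i : Fin (n+1), g (i+1) • x i = x (i+1) := by
  have hsmul : ∀ i, ((⟨g, finRotate (n+1)⟩ : WreathProduct G (n+1)) • x) i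
      = g i • x ((finRotate (n+1))⁻¹ i) := fun i => rfl
  rw [funext_iff]
  constructor
  · intro h i
    have := h (i+1)
    rw [hsmul] at this
    rwa [show (finRotate (n+1))⁻¹ (i+1) = i by
      apply_fun finRotate (n+1)
      simp [finRotate_succ_apply]] at this
  · intro h i
    rw [hsmul]
    have := h ((finRotate (n+1))⁻¹ i)
    rwa [show (finRotate (n+1))⁻¹ i + 1 = i by
      rw [← finRotate_succ_apply]; simp] at this

lemma fixed_eq_partProd (g : Fin (n+1) → G) (x : Fin (n+1) → X)
    (hx : ∀ i : Fin (n+1), g (i+1) • x i = x (i+1)) :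
    ∀ k (hk : k ≤ n), x ⟨k, by omega⟩ = partProd g k • x (Fin.last n) := by
  intro k
  induction k with
  | zero =>
    intro _
    have := hx (Fin.last n)
    rw [show Fin.last n + 1 = 0 by ext; simp [Fin.val_add]] at this
    rw [partProd_zero]
    simp only [Fin.mk_zero]
    exact this.symm
  | succ k ih =>
    intro hk
    have h1 := hx ⟨k, by omega⟩
    rw [fin_add_one k (by omega)] at h1
    rw [← h1, ih (by omega), partProd_succ g (by omega), mul_smul]

end Aux

/-- **Proposition 3-2** (single cycle case): for the `r`-cycle `σ : i ↦ i+1 (mod r)` and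
`g : Fin r → G`, the map `x ↦ x_{r-1}` is a bijection from the fixed point set of
`(g,σ) ∈ G≀𝔖_r` on `X^r` onto the fixed point set `X^{⟨c⟩}` of the cycle product
`c = g_{r-1}⋯g_1g_0` on `X`. -/
theorem wreath_cycle_fixedPoints_bijOn (G X : Type) [Group G] [MulAction G X]
    (r : ℕ) (hr : 1 ≤ r) (g : Fin r → G) :
    Set.BijOn (fun x : Fin r → X => x ⟨r - 1, by omega⟩)
      {x : Fin r → X | (⟨g, finRotate r⟩ : WreathProduct G r) • x = x}
      {y : X | cycleProdOf g • y = y} := by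
  obtain ⟨n, rfl⟩ : ∃ n, r = n+1 := ⟨r-1, by omega⟩
  have hlast : (⟨n+1-1, by omega⟩ : Fin (n+1)) = Fin.last n := rfl
  refine ⟨?_, ?_, ?_⟩
  · intro x hx
    have h := fixed_eq_partProd g x ((fixed_iff g x).mp hx) n le_rfl
    rw [partProd_last] at h
    exact h.symm
  · intro x hx x' hx' hxy
    have h := fixed_eq_partProd g x ((fixed_iff g x).mp hx)
    have h' := fixed_eq_partProd g x' ((fixed_iff g x').mp hx')
    funext i
    have hi : i = ⟨i.val, by omega⟩ := rfl
    rw [hi, h i.val (by omega), h' i.val (by omega)]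
    simp only [hlast] at hxy
    rw [hxy]
  · intro y hy
    have hy' : cycleProdOf g • y = y := hy
    refine ⟨fun i => partProd g i.val • y, ?_, ?_⟩
    · rw [Set.mem_setOf_eq, fixed_iff]
      intro i
      rcases eq_or_ne i (Fin.last n) with h | h
      · subst h
        rw [show Fin.last n + 1 = 0 by ext; simp [Fin.val_add]]
        simp only [Fin.val_last, Fin.val_zero, partProd_last, hy', partProd_zero]
      · have hi : i.val < n := by
          rcases Fin.lt_or_eq_of_le (Fin.le_last i) with h' | h'
          · exact h'
          · exact absurd h' h
        have : i = ⟨i.val, by omega⟩ := rfl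
        rw [this, fin_add_one i.val hi]
        simp only [partProd_succ g hi, mul_smul]
    · show partProd g n • y = y
      rw [partProd_last]; exact hy'
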